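/- Let T be a finite tree with at least two vertices, equipped with an edge-length function ℓ assigning a strictly positive real length to each edge, and suppose (T, ℓ) is short-branched. Let v be a vertex of T which is not a leaf, let v̂ be a vertex of T distinct from v, and let v = v₁, v₂, …, v_n = v̂ be the unique path in T from v to v̂. Then the sum of the barycentric coordinates a(v,w), taken over all leaves w of T such that v̂ lies on the unique path in T from v to w, equals D(v_{n−1}, v̂) · ∏_{i=1}^{n−2} D(vᵢ, vᵢ₊₁)/(1 − D(vᵢ₊₁, vᵢ)). -/

import Mathlib

open scoped Classical
open Finset

noncomputable section

variable {V : Type*}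

/-- A leaf of a graph is a vertex of degree one. -/
def IsLeafVertex [Fintype V] (G : SimpleGraph V) (v : V) : Prop := G.degree v = 1

/-- The finset of leaves of a graph. -/
def leafSet [Fintype V] (G : SimpleGraph V) : Finset V :=
  Finset.univ.filter (fun v => IsLeafVertex G v)

/-- The length of a pseudometric graph: the sum of the lengths of its edges. -/
def totalLength [Fintype V] (G : SimpleGraph V) (ℓ : Sym2 V → ℝ) : ℝ :=
  ∑ e ∈ G.edgeFinset, ℓ e

/-- The leaf length of a tree: one less than its number of leaves. -/
def leafLength [Fintype V] (G : SimpleGraph V) : ℝ := ((leafSet G).card : ℝ) - 1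

/-- `sideComp G u v` is the vertex set of the connected component containing `v` of the
graph obtained from `G` by deleting the vertex `u`: the set of vertices reachable from
`v` by a walk avoiding `u`. -/
def sideComp (G : SimpleGraph V) (u v : V) : Set V :=
  {x | ∃ p : G.Walk v x, u ∉ p.support}

/-- The length of the subspace `T(u,v)`: the sum of the lengths of all edges having at
least one endpoint in `sideComp G u v`. -/
def sideLength [Fintype V] (G : SimpleGraph V) (ℓ : Sym2 V → ℝ) (u v : V) : ℝ :=
  ∑ e ∈ G.edgeFinset.filter (fun e => ∃ x ∈ e, x ∈ sideComp G u v), ℓ e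

/-- The leaf length of the subspace `T(u,v)`: the number of leaves of `G` lying in
`sideComp G u v`. -/
def sideLeafCount [Fintype V] (G : SimpleGraph V) (u v : V) : ℕ :=
  ((leafSet G).filter (fun x => x ∈ sideComp G u v)).card

/-- The deviation `D(u,v)`: the leaf length of `T(u,v)` minus the length of `T(u,v)`. -/
def deviation [Fintype V] (G : SimpleGraph V) (ℓ : Sym2 V → ℝ) (u v : V) : ℝ :=
  (sideLeafCount G u v : ℝ) - sideLength G ℓ u v

/-- The length of the branch at `(u,w)`: `ℓ {u,w}` plus the sum of the lengths of all
edges with both endpoints in `sideComp G u w`. -/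
def branchLength [Fintype V] (G : SimpleGraph V) (ℓ : Sym2 V → ℝ) (u w : V) : ℝ :=
  ℓ s(u, w) + ∑ e ∈ G.edgeFinset.filter (fun e => ∀ x ∈ e, x ∈ sideComp G u w), ℓ e

/-- A pseudometric tree is short-branched if its length equals its leaf length and the
length of every branch (at a vertex of degree at least 3) is at most its leaf length. -/
def ShortBranched [Fintype V] (G : SimpleGraph V) (ℓ : Sym2 V → ℝ) : Prop :=
  totalLength G ℓ = leafLength G ∧
  ∀ u w : V, 3 ≤ G.degree u → G.Adj u w →
    branchLength G ℓ u w ≤ (sideLeafCount G u w : ℝ)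

/-- The product of the factors `D(vᵢ, vᵢ₊₁)/(1 − D(vᵢ₊₁, vᵢ))` along a list of vertices;
applied to the support of the unique path from `v` to `w` this gives the barycentric
coordinate `a(v,w)`. -/
def pathProd [Fintype V] (G : SimpleGraph V) (ℓ : Sym2 V → ℝ) : List V → ℝ
  | a :: b :: rest =>
      (deviation G ℓ a b / (1 - deviation G ℓ b a)) * pathProd G ℓ (b :: rest)
  | _ => 1

namespace SBAux

set_option linter.unusedSectionVars false

open SimpleGraph Walk

variable {V : Type*} (G : SimpleGraph V)

lemma self_mem_sideComp {u v : V} (h : u ≠ v) : v ∈ sideComp G u v := by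
  refine ⟨Walk.nil, ?_⟩
  simpa using h

lemma not_mem_sideComp (u v : V) : u ∉ sideComp G u v :=
  fun ⟨p, hp⟩ => hp p.end_mem_support

lemma ne_of_mem_sideComp {u v x : V} (h : x ∈ sideComp G u v) : x ≠ u :=
  fun e => not_mem_sideComp G u v (e ▸ h)

lemma start_not_mem_sideComp (u v : V) : u ∉ sideComp G u v := not_mem_sideComp G u v

lemma sideComp_adj {u v a b : V} (ha : a ∈ sideComp G u v) (hab : G.Adj a b)
    (hb : b ≠ u) : b ∈ sideComp G u v := by
  obtain ⟨p, hp⟩ := ha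
  refine ⟨p.concat hab, ?_⟩
  rw [Walk.support_concat, List.mem_append]
  rintro (h | h)
  · exact hp h
  · simp at h; exact hb h.symm

lemma sideComp_eq_of_mem {u v x : V} (h : x ∈ sideComp G u v) :
    sideComp G u x = sideComp G u v := by
  obtain ⟨p, hp⟩ := h
  ext z
  constructor
  · rintro ⟨q, hq⟩
    refine ⟨p.append q, ?_⟩
    rw [Walk.mem_support_append_iff]
    rintro (h | h)
    · exact hp h
    · exact hq h
  · rintro ⟨r, hr⟩
    refine ⟨p.reverse.append r, ?_⟩
    rw [Walk.mem_support_append_iff]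
    rintro (h | h)
    · exact hp (by rwa [Walk.support_reverse, List.mem_reverse] at h)
    · exact hr h

variable {G}

lemma walk_eq (hT : G.IsTree) {a b : V} {p q : G.Walk a b} (hp : p.IsPath) (hq : q.IsPath) :
    p = q :=
  ((hT.existsUnique_path a b).unique hp hq)

lemma mem_support_of_walk (hT : G.IsTree) {a b x : V} {p q : G.Walk a b} (hp : p.IsPath)
    (hx : x ∈ p.support) : x ∈ q.support := by
  have h : q.bypass = p := walk_eq hT q.bypass_isPath hp
  exact q.support_bypass_subset (h ▸ hx)

/-- a path `q₁` followed by an edge to `u` being a path forces `u ∉ q₁.support`. -/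
lemma isPath_concat {a b c : V} {q : G.Walk a b} (hq : q.IsPath) (h : G.Adj b c)
    (hc : c ∉ q.support) : (q.concat h).IsPath := by
  rw [← Walk.isPath_reverse_iff, Walk.reverse_concat]
  exact Walk.IsPath.cons hq.reverse (by rwa [Walk.support_reverse, List.mem_reverse])

lemma not_mem_support_of_isPath_concat {a b c : V} {q : G.Walk a b} {h : G.Adj b c}
    (hq : (q.concat h).IsPath) : c ∉ q.support := by
  intro hc
  have := hq.support_nodup
  rw [Walk.support_concat] at this
  have := List.disjoint_of_nodup_append this
  exact this hc (by simp)

lemma isPath_of_isPath_concat {a b c : V} {q : G.Walk a b} {h : G.Adj b c}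
    (hq : (q.concat h).IsPath) : q.IsPath := by
  rw [Walk.concat_eq_append] at hq
  exact hq.of_append_left

end SBAux
namespace SBAux

open SimpleGraph Walk

variable {V : Type*} {G : SimpleGraph V}

lemma crossing (hT : G.IsTree) {y u a c : V} (hadj : G.Adj y u)
    (hc : c ∈ sideComp G y u) (ha : a ∉ sideComp G y u) (hac : G.Adj a c) :
    a = y ∧ c = u := by
  have hcy : c ≠ y := ne_of_mem_sideComp G hc
  have hay : a = y := by
    by_contra h
    exact ha (sideComp_adj G hc hac.symm h)
  subst hay
  refine ⟨rfl, ?_⟩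
  by_contra hcu
  obtain ⟨w, hw⟩ := hc
  have hp : w.bypass.IsPath := w.bypass_isPath
  have hyn : a ∉ w.bypass.reverse.support := by
    rw [Walk.support_reverse, List.mem_reverse]
    exact fun h => hw (w.support_bypass_subset h)
  have hp2 : (Walk.cons hac w.bypass.reverse).IsPath := Walk.IsPath.cons hp.reverse hyn
  have h1 : (Walk.cons hadj Walk.nil).IsPath := by
    simp [Walk.cons_isPath_iff, hadj.ne]
  have heq := walk_eq hT hp2 h1
  have hcmem : c ∈ (Walk.cons hadj Walk.nil).support := by
    rw [← heq]
    exact List.mem_cons_of_mem _ w.bypass.reverse.start_mem_support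
  simp at hcmem
  rcases hcmem with h | h
  · exact hcy h
  · exact hcu h

lemma sideComp_disjoint (hT : G.IsTree) {u z z' : V} (hz : G.Adj u z) (hz' : G.Adj u z')
    (hne : z ≠ z') {x : V} (h1 : x ∈ sideComp G u z) (h2 : x ∈ sideComp G u z') : False := by
  have e1 := sideComp_eq_of_mem G h1
  have e2 := sideComp_eq_of_mem G h2
  have hmem : z' ∈ sideComp G u z := by
    rw [← e1, e2]; exact self_mem_sideComp G hz'.ne
  obtain ⟨w, hw⟩ := hmem
  have hp : w.bypass.IsPath := w.bypass_isPath
  have hu : u ∉ w.bypass.support := fun h => hw (w.support_bypass_subset h)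
  have hp2 : (Walk.cons hz.symm (Walk.cons hz' Walk.nil)).IsPath := by
    simp [Walk.cons_isPath_iff, hz.ne', hne, hz'.ne]
  have heq := walk_eq hT hp hp2
  exact hu (by rw [heq]; simp)

lemma sideComp_cover (hT : G.IsTree) {u x : V} (hne : x ≠ u) :
    ∃ z, G.Adj u z ∧ x ∈ sideComp G u z := by
  obtain ⟨r, hr, -⟩ := hT.existsUnique_path u x
  cases r with
  | nil => exact absurd rfl hne.symm
  | cons h r' =>
    rw [Walk.cons_isPath_iff] at hr
    exact ⟨_, h, r', hr.2⟩

lemma takeUntil_dropUntil_disjoint {a b x : V} {r : G.Walk a b} (hr : r.IsPath)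
    (hx : x ∈ r.support) :
    ∀ c, c ∈ (r.takeUntil x hx).support → c ∈ (r.dropUntil x hx).support → c = x := by
  intro c h1 h2
  have hnod := hr.support_nodup
  rw [← r.take_spec hx, Walk.support_append] at hnod
  have hd := List.disjoint_of_nodup_append hnod
  by_contra hne
  have h3 : c ∈ (r.dropUntil x hx).support.tail := by
    rw [Walk.support_eq_cons (r.dropUntil x hx)] at h2
    rcases List.mem_cons.mp h2 with h2' | h2'
    · exact absurd h2' hne
    · exact h2'
  exact hd h1 h3

lemma start_not_mem_far (hT : G.IsTree) {v y u : V} (q₁ : G.Walk v y) (hadj : G.Adj y u)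
    (hq : (q₁.concat hadj).IsPath) : v ∉ sideComp G y u := by
  rintro ⟨w, hw⟩
  have hyp : y ∈ (q₁.concat hadj).support := by
    rw [Walk.support_concat]
    exact List.mem_append_left _ q₁.end_mem_support
  have hmem : y ∈ w.reverse.support := mem_support_of_walk hT hq hyp
  rw [Walk.support_reverse, List.mem_reverse] at hmem
  exact hw hmem

lemma prefix_not_mem_far (hT : G.IsTree) {v y u : V} {q₁ : G.Walk v y} {hadj : G.Adj y u}
    (hq : (q₁.concat hadj).IsPath) {a : V} (ha : a ∈ q₁.support) :
    a ∉ sideComp G y u := by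
  intro hmem
  have hay : a ≠ y := ne_of_mem_sideComp G hmem
  have hq₁ : q₁.IsPath := isPath_of_isPath_concat hq
  by_cases hvy : v = y
  · subst hvy
    have hnil : q₁ = Walk.nil := Walk.isPath_iff_eq_nil.mp hq₁
    subst hnil
    simp at ha
    exact hay ha
  · have hyt : y ∉ (q₁.takeUntil a ha).support := by
      intro hy
      exact hay ((takeUntil_dropUntil_disjoint hq₁ ha y hy
        (q₁.dropUntil a ha).end_mem_support).symm)
    have havs : a ∈ sideComp G y v := ⟨q₁.takeUntil a ha, hyt⟩
    have e1 := sideComp_eq_of_mem G havs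
    have e2 := sideComp_eq_of_mem G hmem
    have hv : v ∈ sideComp G y u := by
      rw [← e2, e1]
      exact self_mem_sideComp G (fun h => hvy h.symm)
    exact start_not_mem_far hT q₁ hadj hq hv

lemma mem_support_of_sideComp (hT : G.IsTree) {y u : V} (hadj : G.Adj y u) :
    ∀ {x w : V} (q : G.Walk x w), x ∉ sideComp G y u → w ∈ sideComp G y u →
      u ∈ q.support := by
  intro x w q
  induction q with
  | nil => intro hx hw; exact absurd hw hx
  | @cons x c w h q' ih =>
    intro hx hw
    by_cases hc : c ∈ sideComp G y u
    · have := (crossing hT hadj hc hx h).2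
      subst this
      exact List.mem_cons_of_mem _ q'.start_mem_support
    · exact List.mem_cons_of_mem _ (ih hc hw)

lemma mem_support_iff_sideComp (hT : G.IsTree) {v y u w : V} {q₁ : G.Walk v y}
    {hadj : G.Adj y u} (hq : (q₁.concat hadj).IsPath) {r : G.Walk v w} (hr : r.IsPath) :
    u ∈ r.support ↔ w ∈ sideComp G y u := by
  constructor
  · intro hu
    refine ⟨r.dropUntil u hu, ?_⟩
    intro hy
    have ht : r.takeUntil u hu = q₁.concat hadj := walk_eq hT (hr.takeUntil hu) hq
    have hyt : y ∈ (r.takeUntil u hu).support := by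
      rw [ht, Walk.support_concat]
      exact List.mem_append_left _ q₁.end_mem_support
    exact hadj.ne (takeUntil_dropUntil_disjoint hr hu y hyt hy)
  · intro hw
    exact mem_support_of_sideComp hT hadj r (start_not_mem_far hT q₁ hadj hq) hw

end SBAux
namespace SBAux

set_option linter.unusedSectionVars false

open SimpleGraph Walk Finset

variable {V : Type*} [Fintype V] {G : SimpleGraph V} {ℓ : Sym2 V → ℝ}

lemma leaf_mem_leafSet {x : V} (hx : IsLeafVertex G x) : x ∈ leafSet G := by
  simp [leafSet, hx]

lemma isLeaf_of_mem_leafSet {x : V} (hx : x ∈ leafSet G) : IsLeafVertex G x :=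
  (Finset.mem_filter.mp hx).2

lemma leafSet_biUnion (hT : G.IsTree) {u : V} (hu : ¬ IsLeafVertex G u) :
    leafSet G = (G.neighborFinset u).biUnion
      (fun z => (leafSet G).filter (fun x => x ∈ sideComp G u z)) := by
  ext x
  simp only [Finset.mem_biUnion, Finset.mem_filter, SimpleGraph.mem_neighborFinset]
  constructor
  · intro hx
    have hxu : x ≠ u := by rintro rfl; exact hu (isLeaf_of_mem_leafSet hx)
    obtain ⟨z, hz, hm⟩ := sideComp_cover hT hxu
    exact ⟨z, hz, hx, hm⟩
  · rintro ⟨z, -, hx, -⟩; exact hx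

lemma sideLeafCount_sum (hT : G.IsTree) {u : V} (hu : ¬ IsLeafVertex G u) :
    ∑ z ∈ G.neighborFinset u, (sideLeafCount G u z : ℝ) = ((leafSet G).card : ℝ) := by
  have h : (leafSet G).card = ∑ z ∈ G.neighborFinset u, sideLeafCount G u z := by
    rw [leafSet_biUnion hT hu]
    apply Finset.card_biUnion
    intro z hz z' hz' hne
    simp only [Function.onFun]
    rw [Finset.disjoint_left]
    intro e h1 h2
    rw [Finset.mem_filter] at h1 h2
    exact sideComp_disjoint hT (by simpa using hz) (by simpa using hz') hne h1.2 h2.2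
  rw_mod_cast [h]

lemma edge_cover (hT : G.IsTree) (u : V) {e : Sym2 V} (he : e ∈ G.edgeFinset) :
    ∃ z, G.Adj u z ∧ ∃ x ∈ e, x ∈ sideComp G u z := by
  induction e with
  | _ a b =>
    rw [SimpleGraph.mem_edgeFinset, SimpleGraph.mem_edgeSet] at he
    by_cases hau : a = u
    · subst hau
      exact ⟨b, he, b, by simp, self_mem_sideComp G he.ne⟩
    · obtain ⟨z, hz, hm⟩ := sideComp_cover hT hau
      exact ⟨z, hz, a, by simp, hm⟩

lemma edge_disjoint (hT : G.IsTree) {u z z' : V} (hz : G.Adj u z) (hz' : G.Adj u z')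
    (hne : z ≠ z') {e : Sym2 V} (he : e ∈ G.edgeFinset)
    (h1 : ∃ x ∈ e, x ∈ sideComp G u z) (h2 : ∃ x ∈ e, x ∈ sideComp G u z') : False := by
  obtain ⟨x, hxe, hx⟩ := h1
  obtain ⟨x', hxe', hx'⟩ := h2
  by_cases hxx : x = x'
  · exact sideComp_disjoint hT hz hz' hne hx (hxx ▸ hx')
  · have hesm : e = s(x, x') := (Sym2.mem_and_mem_iff hxx).mp ⟨hxe, hxe'⟩
    rw [SimpleGraph.mem_edgeFinset, hesm, SimpleGraph.mem_edgeSet] at he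
    have hx'u : x' ≠ u := ne_of_mem_sideComp G hx'
    have : x' ∈ sideComp G u z := sideComp_adj G hx he hx'u
    exact sideComp_disjoint hT hz hz' hne this hx'

lemma sideLength_sum (hT : G.IsTree) (u : V) :
    ∑ z ∈ G.neighborFinset u, sideLength G ℓ u z = totalLength G ℓ := by
  have hbi : G.edgeFinset = (G.neighborFinset u).biUnion
      (fun z => G.edgeFinset.filter (fun e => ∃ x ∈ e, x ∈ sideComp G u z)) := by
    ext e
    simp only [Finset.mem_biUnion, Finset.mem_filter, SimpleGraph.mem_neighborFinset]
    constructor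
    · intro he
      obtain ⟨z, hz, hx⟩ := edge_cover hT u he
      exact ⟨z, hz, he, hx⟩
    · rintro ⟨z, -, he, -⟩; exact he
  rw [totalLength]
  rw [hbi, Finset.sum_biUnion]
  · rfl
  · intro z hz z' hz' hne
    simp only [Function.onFun]
    rw [Finset.disjoint_left]
    intro e h1 h2
    rw [Finset.mem_filter] at h1 h2
    exact edge_disjoint hT (by simpa using hz) (by simpa using hz') hne h1.1 h1.2 h2.2

lemma deviation_sum (hT : G.IsTree) (hsb : ShortBranched G ℓ) {u : V}
    (hu : ¬ IsLeafVertex G u) :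
    ∑ z ∈ G.neighborFinset u, deviation G ℓ u z = 1 := by
  simp only [deviation]
  rw [Finset.sum_sub_distrib, sideLength_sum hT u, sideLeafCount_sum hT hu]
  have h1 : totalLength G ℓ = ((leafSet G).card : ℝ) - 1 := hsb.1
  linarith

lemma sideComp_pair_disjoint (hT : G.IsTree) {a b x : V} (hadj : G.Adj a b)
    (h1 : x ∈ sideComp G a b) (h2 : x ∈ sideComp G b a) : False := by
  obtain ⟨w1, hw1⟩ := h1
  obtain ⟨w2, hw2⟩ := h2
  have hp2 : w2.bypass.IsPath := w2.bypass_isPath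
  have hb2 : b ∉ w2.bypass.support := fun h => hw2 (w2.support_bypass_subset h)
  have hp : (Walk.cons hadj.symm w2.bypass).IsPath := hp2.cons hb2
  have hmem : a ∈ (Walk.cons hadj.symm w2.bypass).support :=
    List.mem_cons_of_mem _ w2.bypass.start_mem_support
  exact hw1 (mem_support_of_walk hT hp hmem)

lemma sideComp_pair_cover (hT : G.IsTree) {a b : V} (hab : a ≠ b) (x : V) :
    x ∈ sideComp G a b ∨ x ∈ sideComp G b a := by
  obtain ⟨r, hr, -⟩ := hT.existsUnique_path a x
  by_cases hbm : b ∈ r.support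
  · left
    refine ⟨r.dropUntil b hbm, ?_⟩
    intro ham
    exact hab (takeUntil_dropUntil_disjoint hr hbm a
      (r.takeUntil b hbm).start_mem_support ham)
  · right; exact ⟨r, hbm⟩

lemma deviation_pair (hT : G.IsTree) (hsb : ShortBranched G ℓ) {a b : V}
    (hadj : G.Adj a b) :
    deviation G ℓ a b + deviation G ℓ b a = 1 - ℓ s(a, b) := by
  have hcount : (sideLeafCount G a b : ℝ) + sideLeafCount G b a = (leafSet G).card := by
    have h : sideLeafCount G a b + sideLeafCount G b a = (leafSet G).card := by
      rw [sideLeafCount, sideLeafCount,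
        ← Finset.card_filter_add_card_filter_not
          (p := fun x => x ∈ sideComp G a b) (s := leafSet G)]
      have heq : (leafSet G).filter (fun x => x ∈ sideComp G b a)
          = (leafSet G).filter (fun x => ¬ x ∈ sideComp G a b) := by
        apply Finset.filter_congr
        intro x _
        constructor
        · intro h2 h1; exact sideComp_pair_disjoint hT hadj h1 h2
        · intro h1
          rcases sideComp_pair_cover hT hadj.ne x with h | h
          · exact absurd h h1
          · exact h
      rw [heq]
    exact_mod_cast congrArg (Nat.cast : ℕ → ℝ) h
  have hlen : sideLength G ℓ a b + sideLength G ℓ b a = totalLength G ℓ + ℓ s(a, b) := by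
    rw [sideLength, sideLength]
    rw [← Finset.sum_union_inter]
    have hunion : (G.edgeFinset.filter (fun e => ∃ x ∈ e, x ∈ sideComp G a b)) ∪
        (G.edgeFinset.filter (fun e => ∃ x ∈ e, x ∈ sideComp G b a)) = G.edgeFinset := by
      ext e
      simp only [Finset.mem_union, Finset.mem_filter]
      constructor
      · rintro (⟨he, -⟩ | ⟨he, -⟩) <;> exact he
      · intro he
        rcases sideComp_pair_cover hT hadj.ne e.out.1 with h | h
        · exact Or.inl ⟨he, e.out.1, Sym2.out_fst_mem e, h⟩
        · exact Or.inr ⟨he, e.out.1, Sym2.out_fst_mem e, h⟩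
    have hinter : (G.edgeFinset.filter (fun e => ∃ x ∈ e, x ∈ sideComp G a b)) ∩
        (G.edgeFinset.filter (fun e => ∃ x ∈ e, x ∈ sideComp G b a)) = {s(a, b)} := by
      ext e
      simp only [Finset.mem_inter, Finset.mem_filter, Finset.mem_singleton]
      constructor
      · rintro ⟨⟨he, x, hxe, hx⟩, ⟨-, x', hxe', hx'⟩⟩
        have hxx : x ≠ x' := by
          rintro rfl; exact sideComp_pair_disjoint hT hadj hx hx'
        have hesm : e = s(x, x') := (Sym2.mem_and_mem_iff hxx).mp ⟨hxe, hxe'⟩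
        rw [SimpleGraph.mem_edgeFinset, hesm, SimpleGraph.mem_edgeSet] at he
        have hx'n : x' ∉ sideComp G a b := fun h => sideComp_pair_disjoint hT hadj h hx'
        obtain ⟨h1, h2⟩ := crossing hT hadj hx hx'n he.symm
        rw [hesm, h1, h2, Sym2.eq_swap]
      · rintro rfl
        refine ⟨⟨SimpleGraph.mem_edgeFinset.mpr hadj, b, by simp,
          self_mem_sideComp G hadj.ne⟩,
          ⟨SimpleGraph.mem_edgeFinset.mpr hadj, a, by simp,
          self_mem_sideComp G hadj.ne'⟩⟩
    rw [hunion, hinter, Finset.sum_singleton, totalLength]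
  have h1 : totalLength G ℓ = ((leafSet G).card : ℝ) - 1 := hsb.1
  simp only [deviation]
  linarith

lemma sideLength_eq_branchLength (hT : G.IsTree) {u z : V} (hadj : G.Adj u z) :
    sideLength G ℓ u z = branchLength G ℓ u z := by
  rw [sideLength, branchLength]
  have hset : G.edgeFinset.filter (fun e => ∃ x ∈ e, x ∈ sideComp G u z)
      = insert s(u, z) (G.edgeFinset.filter (fun e => ∀ x ∈ e, x ∈ sideComp G u z)) := by
    ext e
    simp only [Finset.mem_insert, Finset.mem_filter]
    constructor
    · rintro ⟨he, x, hxe, hx⟩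
      by_cases hall : ∀ x' ∈ e, x' ∈ sideComp G u z
      · right; exact ⟨he, hall⟩
      · left
        push_neg at hall
        obtain ⟨x', hxe', hx'⟩ := hall
        have hne : x ≠ x' := fun h => hx' (h ▸ hx)
        have hesm : e = s(x, x') := (Sym2.mem_and_mem_iff hne).mp ⟨hxe, hxe'⟩
        rw [SimpleGraph.mem_edgeFinset, hesm, SimpleGraph.mem_edgeSet] at he
        obtain ⟨h1, h2⟩ := crossing hT hadj hx hx' he.symm
        rw [hesm, h1, h2, Sym2.eq_swap]
    · rintro (rfl | ⟨he, hall⟩)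
      · exact ⟨SimpleGraph.mem_edgeFinset.mpr hadj, z, by simp,
          self_mem_sideComp G hadj.ne⟩
      · exact ⟨he, e.out.1, Sym2.out_fst_mem e, hall _ (Sym2.out_fst_mem e)⟩
  rw [hset, Finset.sum_insert]
  simp only [Finset.mem_filter]
  rintro ⟨-, hall⟩
  exact not_mem_sideComp G u z (hall u (by simp))

end SBAux
namespace SBAux

set_option linter.unusedSectionVars false

open SimpleGraph Walk Finset

variable {V : Type*} [Fintype V] {G : SimpleGraph V} {ℓ : Sym2 V → ℝ}

lemma neighborFinset_eq_of_leaf {u y : V} (hu : G.degree u = 1) (hadj : G.Adj u y) :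
    G.neighborFinset u = {y} := by
  rw [← SimpleGraph.card_neighborFinset_eq_degree] at hu
  obtain ⟨a, ha⟩ := Finset.card_eq_one.mp hu
  have hy : y ∈ G.neighborFinset u := by simpa using hadj
  rw [ha] at hy
  simp at hy
  rw [ha, hy]

lemma deviation_eq_zero_of_leaf (hT : G.IsTree) (hsb : ShortBranched G ℓ) {u y : V}
    (hu : G.degree u = 1) (hadj : G.Adj u y) : deviation G ℓ u y = 0 := by
  have hcompl : ∀ x : V, x ≠ u → x ∈ sideComp G u y := by
    intro x hx
    obtain ⟨z, hz, hm⟩ := sideComp_cover hT hx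
    have hzy : z = y := by
      have hzn : z ∈ G.neighborFinset u := by simpa using hz
      rw [neighborFinset_eq_of_leaf hu hadj] at hzn
      simpa using hzn
    rwa [hzy] at hm
  have hmem : u ∈ leafSet G := leaf_mem_leafSet hu
  have hcount : sideLeafCount G u y = (leafSet G).card - 1 := by
    rw [sideLeafCount]
    have heq : (leafSet G).filter (fun x => x ∈ sideComp G u y) = (leafSet G).erase u := by
      ext x
      simp only [Finset.mem_filter, Finset.mem_erase]
      constructor
      · rintro ⟨h1, h2⟩; exact ⟨ne_of_mem_sideComp G h2, h1⟩
      · rintro ⟨h1, h2⟩; exact ⟨h2, hcompl x h1⟩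
    rw [heq, Finset.card_erase_of_mem hmem]
  have hlen : sideLength G ℓ u y = totalLength G ℓ := by
    rw [sideLength, totalLength]
    congr 1
    apply Finset.filter_true_of_mem
    intro e he
    induction e with
    | _ a b =>
      rw [SimpleGraph.mem_edgeFinset, SimpleGraph.mem_edgeSet] at he
      by_cases hau : a = u
      · exact ⟨b, by simp, hcompl b (fun h => he.ne (by rw [hau, h]))⟩
      · exact ⟨a, by simp, hcompl a hau⟩
  have hcard : 1 ≤ (leafSet G).card := Finset.card_pos.mpr ⟨u, hmem⟩
  rw [deviation, hcount, hlen, hsb.1, leafLength]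
  rw [Nat.cast_sub hcard]
  push_cast
  ring

lemma sideComp_singleton_of_leaf (hT : G.IsTree) {u y : V} (hu : G.degree u = 1)
    (hadj : G.Adj y u) : sideComp G y u = {u} := by
  ext x
  simp only [Set.mem_singleton_iff]
  constructor
  · rintro ⟨w, hw⟩
    cases w with
    | nil => rfl
    | @cons _ c _ h w' =>
      exfalso
      have hc : c ∈ G.neighborFinset u := by simpa using h
      rw [neighborFinset_eq_of_leaf hu hadj.symm] at hc
      simp at hc
      subst hc
      exact hw (List.mem_cons_of_mem _ w'.start_mem_support)
  · rintro rfl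
    exact self_mem_sideComp G hadj.ne

lemma deviation_nonneg (hT : G.IsTree) (hℓ : ∀ e ∈ G.edgeSet, 0 < ℓ e)
    (hsb : ShortBranched G ℓ) {a b : V} (hadj : G.Adj a b) :
    0 ≤ deviation G ℓ a b := by
  suffices H : ∀ n (a b : V), G.Adj a b →
      (Finset.univ.filter (fun x => x ∈ sideComp G b a)).card < n →
      0 ≤ deviation G ℓ a b by
    exact H _ a b hadj (Nat.lt_succ_self _)
  intro n
  induction n with
  | zero => intro a b _ h; omega
  | succ n ih =>
    intro a b hadj hcard
    rcases lt_trichotomy (G.degree a) 2 with hdeg | hdeg | hdeg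
    · have h1 : G.degree a = 1 := by
        have h0 : 0 < G.degree a := by
          rw [← SimpleGraph.card_neighborFinset_eq_degree]
          exact Finset.card_pos.mpr ⟨b, by simpa using hadj⟩
        omega
      rw [deviation_eq_zero_of_leaf hT hsb h1 hadj]
    · -- degree a = 2
      have hcard2 : (G.neighborFinset a).card = 2 := by
        rw [SimpleGraph.card_neighborFinset_eq_degree]; exact hdeg
      obtain ⟨x, y, hxy, hset⟩ := Finset.card_eq_two.mp hcard2
      have hb : b ∈ G.neighborFinset a := by simpa using hadj
      rw [hset] at hb
      simp at hb
      obtain ⟨c, hcadj, hcb, hNset⟩ :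
          ∃ c, G.Adj a c ∧ c ≠ b ∧ G.neighborFinset a = {b, c} := by
        rcases hb with rfl | rfl
        · refine ⟨y, ?_, Ne.symm hxy, hset⟩
          have : y ∈ G.neighborFinset a := by rw [hset]; simp
          simpa using this
        · refine ⟨x, ?_, hxy, by rw [hset, Finset.pair_comm]⟩
          have : x ∈ G.neighborFinset a := by rw [hset]; simp
          simpa using this
      have hnl : ¬ IsLeafVertex G a := by
        intro h
        have : G.degree a = 1 := h
        omega
      have hsum := deviation_sum hT hsb hnl
      rw [hNset, Finset.sum_pair (Ne.symm hcb)] at hsum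
      have hpair := deviation_pair hT hsb hcadj
      have hmono : ∀ x, x ∈ sideComp G a c → x ∈ sideComp G b a := by
        rintro x ⟨w, hw⟩
        have hbw : b ∉ w.support := by
          intro hbw
          have hbm : b ∈ sideComp G a c :=
            ⟨w.takeUntil b hbw, fun h => hw (w.support_takeUntil_subset _ h)⟩
          exact sideComp_disjoint hT hcadj hadj hcb hbm (self_mem_sideComp G hadj.ne)
        refine ⟨Walk.cons hcadj w, ?_⟩
        rw [Walk.support_cons]
        intro hmem
        rcases List.mem_cons.mp hmem with h | h
        · exact hadj.ne' h
        · exact hbw h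
      have hrec : 0 ≤ deviation G ℓ c a := by
        apply ih c a hcadj.symm
        have hlt : (Finset.univ.filter (fun x => x ∈ sideComp G a c)).card
            < (Finset.univ.filter (fun x => x ∈ sideComp G b a)).card := by
          apply Finset.card_lt_card
          rw [Finset.ssubset_iff_of_subset]
          · refine ⟨a, ?_, ?_⟩
            · simp only [Finset.mem_filter, Finset.mem_univ, true_and]
              exact self_mem_sideComp G hadj.ne'
            · simp only [Finset.mem_filter, Finset.mem_univ, true_and]
              exact not_mem_sideComp G a c
          · intro x hx
            simp only [Finset.mem_filter, Finset.mem_univ, true_and] at hx ⊢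
            exact hmono x hx
        omega
      have hpos : 0 < ℓ s(a, c) := hℓ _ ((SimpleGraph.mem_edgeSet G).mpr hcadj)
      linarith
    · have hb := hsb.2 a b (by omega) hadj
      rw [deviation, sideLength_eq_branchLength hT hadj]
      linarith

lemma pathProd_cons {a b x : V} (q : G.Walk b x) :
    pathProd G ℓ (a :: q.support)
      = (deviation G ℓ a b / (1 - deviation G ℓ b a)) * pathProd G ℓ q.support := by
  rw [Walk.support_eq_cons q]
  rfl

lemma pathProd_concat {v y u : V} (q : G.Walk v y) (h : G.Adj y u) :
    pathProd G ℓ (q.concat h).support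
      = pathProd G ℓ q.support * (deviation G ℓ y u / (1 - deviation G ℓ u y)) := by
  induction q with
  | nil =>
    rw [Walk.concat_nil]
    simp [pathProd]
  | cons hadj q' ih =>
    rw [Walk.concat_cons, Walk.support_cons, pathProd_cons (q'.concat h), ih,
      Walk.support_cons, pathProd_cons q']
    ring

end SBAux
namespace SBAux

set_option linter.unusedSectionVars false

open SimpleGraph Walk Finset

variable {V : Type*} [Fintype V] {G : SimpleGraph V} {ℓ : Sym2 V → ℝ}

lemma sideComp_sub (hT : G.IsTree) {u y z : V} (hadj : G.Adj y u) (hz : G.Adj u z)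
    (hzy : z ≠ y) : ∀ x, x ∈ sideComp G u z → x ∈ sideComp G y u := by
  rintro x ⟨t, ht⟩
  have hyt : y ∉ t.support := by
    intro hyt
    have hym : y ∈ sideComp G u z :=
      ⟨t.takeUntil y hyt, fun h => ht (t.support_takeUntil_subset _ h)⟩
    exact sideComp_disjoint hT hz hadj.symm hzy hym (self_mem_sideComp G hadj.ne')
  refine ⟨Walk.cons hz t, ?_⟩
  rw [Walk.support_cons]
  intro hmem
  rcases List.mem_cons.mp hmem with h | h
  · exact hadj.ne h
  · exact hyt h

lemma main_induction (hT : G.IsTree) (hℓ : ∀ e ∈ G.edgeSet, 0 < ℓ e)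
    (hsb : ShortBranched G ℓ) (v : V) (p : ∀ w : V, G.Walk v w)
    (hp : ∀ w, (p w).IsPath) :
    ∀ n (u y : V) (hadj : G.Adj y u) (q₁ : G.Walk v y),
      (q₁.concat hadj).IsPath →
      (Finset.univ.filter (fun x => x ∈ sideComp G y u)).card ≤ n →
      ∑ w ∈ (leafSet G).filter (fun w => w ∈ sideComp G y u),
          pathProd G ℓ (p w).support
        = deviation G ℓ y u * pathProd G ℓ q₁.support := by
  intro n
  induction n with
  | zero =>
    intro u y hadj q₁ hq hcard
    exfalso
    have hmem : u ∈ Finset.univ.filter (fun x => x ∈ sideComp G y u) := by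
      simp only [Finset.mem_filter, Finset.mem_univ, true_and]
      exact self_mem_sideComp G hadj.ne
    have := Finset.card_pos.mpr ⟨u, hmem⟩
    omega
  | succ n ih =>
    intro u y hadj q₁ hq hcard
    by_cases hdeg : G.degree u = 1
    · -- base case: u is a leaf
      have hS : sideComp G y u = {u} := sideComp_singleton_of_leaf hT hdeg hadj
      have hfil : (leafSet G).filter (fun w => w ∈ sideComp G y u) = {u} := by
        ext w
        simp only [Finset.mem_filter, hS, Set.mem_singleton_iff, Finset.mem_singleton]
        constructor
        · rintro ⟨-, h⟩; exact h
        · rintro rfl; exact ⟨leaf_mem_leafSet hdeg, rfl⟩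
      rw [hfil, Finset.sum_singleton]
      have hpu : p u = q₁.concat hadj := walk_eq hT (hp u) hq
      rw [hpu, pathProd_concat, deviation_eq_zero_of_leaf hT hsb hdeg hadj.symm]
      simp only [sub_zero, div_one]
      ring
    · -- inductive step: u is not a leaf
      have hunl : ¬ IsLeafVertex G u := hdeg
      have hfil : (leafSet G).filter (fun w => w ∈ sideComp G y u)
          = ((G.neighborFinset u).erase y).biUnion
              (fun z => (leafSet G).filter (fun w => w ∈ sideComp G u z)) := by
        ext w
        simp only [Finset.mem_biUnion, Finset.mem_filter, Finset.mem_erase,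
          SimpleGraph.mem_neighborFinset]
        constructor
        · rintro ⟨hw, hwS⟩
          have hwu : w ≠ u := fun h => hunl (h ▸ isLeaf_of_mem_leafSet hw)
          obtain ⟨z, hz, hm⟩ := sideComp_cover hT hwu
          have hzy : z ≠ y := by
            rintro rfl
            exact sideComp_pair_disjoint hT hadj hwS hm
          exact ⟨z, ⟨hzy, hz⟩, hw, hm⟩
        · rintro ⟨z, ⟨hzy, hz⟩, hw, hm⟩
          exact ⟨hw, sideComp_sub hT hadj hz hzy w hm⟩
      have hdisj : Set.PairwiseDisjoint (((G.neighborFinset u).erase y) : Set V)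
          (fun z => (leafSet G).filter (fun w => w ∈ sideComp G u z)) := by
        intro z hz z' hz' hne
        simp only [Finset.coe_erase, Set.mem_diff, Finset.mem_coe,
          SimpleGraph.mem_neighborFinset] at hz hz'
        simp only [Function.onFun]
        rw [Finset.disjoint_left]
        intro e h1 h2
        rw [Finset.mem_filter] at h1 h2
        exact sideComp_disjoint hT hz.1 hz'.1 hne h1.2 h2.2
      rw [hfil, Finset.sum_biUnion hdisj]
      have hstep : ∀ z ∈ (G.neighborFinset u).erase y,
          (∑ w ∈ (leafSet G).filter (fun w => w ∈ sideComp G u z),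
            pathProd G ℓ (p w).support)
          = deviation G ℓ u z * pathProd G ℓ (q₁.concat hadj).support := by
        intro z hz'
        have hz'' : z ≠ y ∧ G.Adj u z := by
          simpa [Finset.mem_erase, SimpleGraph.mem_neighborFinset] using hz'
        obtain ⟨hzy, hz⟩ := hz''
        have hzS : z ∈ sideComp G y u :=
          sideComp_sub hT hadj hz hzy z (self_mem_sideComp G hz.ne)
        have hznotin : z ∉ (q₁.concat hadj).support := by
          rw [Walk.support_concat, List.mem_append]
          rintro (h | h)
          · exact prefix_not_mem_far hT hq h hzS
          · simp at h; exact hz.ne h.symm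
        have hq' : ((q₁.concat hadj).concat hz).IsPath := isPath_concat hq hz hznotin
        have hle : (Finset.univ.filter (fun x => x ∈ sideComp G u z)).card ≤ n := by
          have hlt : (Finset.univ.filter (fun x => x ∈ sideComp G u z)).card
              < (Finset.univ.filter (fun x => x ∈ sideComp G y u)).card := by
            apply Finset.card_lt_card
            rw [Finset.ssubset_iff_of_subset]
            · refine ⟨u, ?_, ?_⟩
              · simp only [Finset.mem_filter, Finset.mem_univ, true_and]
                exact self_mem_sideComp G hadj.ne
              · simp only [Finset.mem_filter, Finset.mem_univ, true_and]
                exact not_mem_sideComp G u z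
            · intro x hx
              simp only [Finset.mem_filter, Finset.mem_univ, true_and] at hx ⊢
              exact sideComp_sub hT hadj hz hzy x hx
          omega
        exact ih z u hz (q₁.concat hadj) hq' hle
      rw [Finset.sum_congr rfl hstep, ← Finset.sum_mul, pathProd_concat]
      have hymem : y ∈ G.neighborFinset u := by simpa using hadj.symm
      have hysum : ∑ z ∈ (G.neighborFinset u).erase y, deviation G ℓ u z
          = 1 - deviation G ℓ u y := by
        have hsum := deviation_sum hT hsb hunl
        rw [← Finset.add_sum_erase _ _ hymem] at hsum
        linarith
      rw [hysum]
      have hpair := deviation_pair hT hsb hadj.symm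
      have hnn := deviation_nonneg hT hℓ hsb hadj
      have hpos : 0 < ℓ s(u, y) := hℓ _ ((SimpleGraph.mem_edgeSet G).mpr hadj.symm)
      have hne0 : 1 - deviation G ℓ u y ≠ 0 := by
        have : deviation G ℓ y u + ℓ s(u, y) = 1 - deviation G ℓ u y := by linarith
        intro h
        rw [h] at this
        linarith
      field_simp

end SBAux
/-- **The generalized summation identity** from the proof of the paper's Lemma A.8: in a
short-branched tree with strictly positive edge lengths, let `v` be a non-leaf vertex and
let `v = v₁, …, vₙ = u` be the unique path from `v` to a vertex `u ≠ v` (written as the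
path `q₁` from `v` to the penultimate vertex `y = vₙ₋₁` followed by the edge `y–u`).
Then the sum of the barycentric coordinates `a(v,w)` over all leaves `w` such that `u`
lies on the unique path from `v` to `w` equals
`D(vₙ₋₁, u) · ∏_{i=1}^{n-2} D(vᵢ,vᵢ₊₁)/(1 - D(vᵢ₊₁,vᵢ))`. -/
theorem sum_barycentric_through_vertex [Fintype V] [DecidableEq V] (G : SimpleGraph V)
    (ℓ : Sym2 V → ℝ) (hT : G.IsTree) (hV : 1 < Fintype.card V)
    (hℓ : ∀ e ∈ G.edgeSet, 0 < ℓ e) (hsb : ShortBranched G ℓ)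
    (v : V) (hv : ¬ IsLeafVertex G v) (u : V) (huv : u ≠ v)
    (y : V) (q₁ : G.Walk v y) (hadj : G.Adj y u) (hq : (q₁.concat hadj).IsPath)
    (p : ∀ w : V, G.Walk v w) (hp : ∀ w, (p w).IsPath) :
    ∑ w ∈ (leafSet G).filter (fun w => u ∈ (p w).support),
        pathProd G ℓ (p w).support
      = deviation G ℓ y u * pathProd G ℓ q₁.support := by
  have hfil : (leafSet G).filter (fun w => u ∈ (p w).support)
      = (leafSet G).filter (fun w => w ∈ sideComp G y u) := by
    apply Finset.filter_congr
    intro w _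
    constructor
    · intro h
      exact (SBAux.mem_support_iff_sideComp hT hq (hp w)).mp h
    · intro h
      exact (SBAux.mem_support_iff_sideComp hT hq (hp w)).mpr h
  rw [hfil]
  exact SBAux.main_induction hT hℓ hsb v p hp _ u y hadj q₁ hq le_rfl
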